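/- For every integer n, the square of the bicomplex Pell number satisfies BP(n)² = 4·P(2n+3)·1 − 4·P(2n+3)·i + 2·(P(2n+1) − 6·P(n+1)²)·j + 2·(6·P(n)·P(n+1) + 2·P(2n+1))·ij. -/

import Mathlib

open scoped TensorProduct

noncomputable def bi : ℂ ⊗[ℝ] ℂ := Complex.I ⊗ₜ[ℝ] 1
noncomputable def bj : ℂ ⊗[ℝ] ℂ := (1 : ℂ) ⊗ₜ[ℝ] Complex.I
noncomputable def bij : ℂ ⊗[ℝ] ℂ := Complex.I ⊗ₜ[ℝ] Complex.I

/-- The bicomplex Pell number `BP n = P n + P (n+1) i + P (n+2) j + P (n+3) ij`. -/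
noncomputable def BP (P : ℤ → ℤ) (n : ℤ) : ℂ ⊗[ℝ] ℂ :=
  (P n : ℝ) • (1 : ℂ ⊗[ℝ] ℂ) + (P (n + 1) : ℝ) • bi + (P (n + 2) : ℝ) • bj +
    (P (n + 3) : ℝ) • bij

lemma one_def' : (1 : ℂ ⊗[ℝ] ℂ) = (1 : ℂ) ⊗ₜ[ℝ] (1 : ℂ) := rfl

lemma bi_mul_bi : bi * bi = -1 := by
  simp [bi, Algebra.TensorProduct.tmul_mul_tmul, Complex.I_mul_I, one_def', TensorProduct.neg_tmul, TensorProduct.tmul_neg]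

lemma bj_mul_bj : bj * bj = -1 := by
  simp [bj, Algebra.TensorProduct.tmul_mul_tmul, Complex.I_mul_I, one_def', TensorProduct.neg_tmul, TensorProduct.tmul_neg]

lemma bij_mul_bij : bij * bij = 1 := by
  simp [bij, Algebra.TensorProduct.tmul_mul_tmul, Complex.I_mul_I, one_def', TensorProduct.neg_tmul, TensorProduct.tmul_neg]

lemma bi_mul_bj : bi * bj = bij := by
  simp [bi, bj, bij, Algebra.TensorProduct.tmul_mul_tmul]

lemma bi_mul_bij : bi * bij = -bj := by
  simp [bi, bj, bij, Algebra.TensorProduct.tmul_mul_tmul, Complex.I_mul_I, TensorProduct.neg_tmul, TensorProduct.tmul_neg]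

lemma bj_mul_bij : bj * bij = -bi := by
  simp [bi, bj, bij, Algebra.TensorProduct.tmul_mul_tmul, Complex.I_mul_I, TensorProduct.neg_tmul, TensorProduct.tmul_neg]

lemma sq_formula (x a b c : ℝ) :
    (x • (1 : ℂ ⊗[ℝ] ℂ) + a • bi + b • bj + c • bij) ^ 2 =
      (x^2 - a^2 - b^2 + c^2) • (1 : ℂ ⊗[ℝ] ℂ) + (2*x*a - 2*b*c) • bi +
        (2*x*b - 2*a*c) • bj + (2*x*c + 2*a*b) • bij := by
  have comm : ∀ u v : ℂ ⊗[ℝ] ℂ, u * v = v * u := fun u v => mul_comm u v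
  rw [sq]
  simp only [add_mul, mul_add, smul_mul_smul_comm, mul_one, one_mul,
    bi_mul_bi, bj_mul_bj, bij_mul_bij, bi_mul_bj, bi_mul_bij, bj_mul_bij,
    mul_comm bj bi, mul_comm bij bi, mul_comm bij bj, smul_neg]
  module

lemma pell_key (P : ℤ → ℤ) (hP : ∀ n : ℤ, P (n + 2) = 2 * P (n + 1) + P n)
    (hP0 : P 0 = 0) (hP1 : P 1 = 1) :
    ∀ n : ℤ, P (2*n) = 2*P n*P (n+1) - 2*(P n)^2 ∧ P (2*n+1) = (P n)^2 + (P (n+1))^2 := by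
  intro n
  induction n using Int.induction_on with
  | zero => norm_num [hP0, hP1]
  | succ k ih =>
    obtain ⟨ih1, ih2⟩ := ih
    have A := hP (2*k)
    have B := hP (2*k+1)
    have C := hP k
    rw [show (2:ℤ)*k+2 = 2*k+1+1 from by ring] at A
    rw [show (2:ℤ)*k+1+2 = 2*k+1+1+1 from by ring] at B
    rw [show (k:ℤ)+2 = k+1+1 from by ring] at C
    rw [show (2:ℤ)*(k+1) = 2*k+1+1 from by ring]
    constructor
    · linear_combination A + 2*ih2 + ih1 - 2*P (k+1)*C
    · linear_combination B + 2*A + 5*ih2 + 2*ih1 - (P k + 2*P (k+1) + P (k+1+1))*C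
  | pred k ih =>
    obtain ⟨ih1, ih2⟩ := ih
    set m : ℤ := -(k:ℤ) with hm
    have A := hP (2*m-2)
    have B := hP (2*m-1)
    have C := hP (m-1)
    rw [show (2:ℤ)*m-2+2 = 2*m from by ring, show (2:ℤ)*m-2+1 = 2*m-1 from by ring] at A
    rw [show (2:ℤ)*m-1+2 = 2*m+1 from by ring, show (2:ℤ)*m-1+1 = 2*m from by ring] at B
    rw [show m-1+2 = m+1 from by ring, show m-1+1 = m from by ring] at C
    rw [show (2:ℤ)*(m-1) = 2*m-2 from by ring, show (2:ℤ)*m-2+1 = 2*m-1 from by ring,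
      show m-1+1 = m from by ring]
    have h2 : P (2*m-1) = (P (m-1))^2 + (P m)^2 := by
      linear_combination (-1)*B + ih2 + (-2)*ih1 + (P (m+1)-2*P m+P (m-1))*C
    refine ⟨?_, h2⟩
    linear_combination (-1)*A + (-2)*h2 + ih1 + 2*P m*C

theorem bicomplexPell_sq (P : ℤ → ℤ)
    (hP : ∀ n : ℤ, P (n + 2) = 2 * P (n + 1) + P n) (hP0 : P 0 = 0) (hP1 : P 1 = 1)
    (n : ℤ) :
    BP P n ^ 2 =
      (4 * (P (2 * n + 3) : ℝ)) • (1 : ℂ ⊗[ℝ] ℂ) - (4 * (P (2 * n + 3) : ℝ)) • bi +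
        (2 * ((P (2 * n + 1) : ℝ) - 6 * (P (n + 1) : ℝ) ^ 2)) • bj +
        (2 * (6 * (P n : ℝ) * (P (n + 1) : ℝ) + 2 * (P (2 * n + 1) : ℝ))) • bij := by
  have k1 := (pell_key P hP hP0 hP1 n).2
  have k2 := (pell_key P hP hP0 hP1 (n+1)).2
  rw [show 2*(n+1)+1 = 2*n+3 from by ring, show n+1+1 = n+2 from by ring] at k2
  have C1 := hP n
  have C2 := hP (n+1)
  rw [show n+1+2 = n+3 from by ring, show n+1+1 = n+2 from by ring] at C2
  have r1 : (P (2*n+1) : ℝ) = (P n : ℝ)^2 + (P (n+1) : ℝ)^2 := by exact_mod_cast k1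
  have r2 : (P (2*n+3) : ℝ) = (P (n+1) : ℝ)^2 + (P (n+2) : ℝ)^2 := by exact_mod_cast k2
  have s1 : (P (n+2) : ℝ) = 2*(P (n+1) : ℝ) + (P n : ℝ) := by exact_mod_cast C1
  have s2 : (P (n+3) : ℝ) = 2*(P (n+2) : ℝ) + (P (n+1) : ℝ) := by exact_mod_cast C2
  rw [BP, sq_formula, r1, r2, s2, s1]
  module
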